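/- arXiv:2002.09722 — 6 statements merged into one kernel-verified Lean document; each statement's English description precedes it below -/
import Mathlib

section
/- For every integer n ≥ 4 there exists a finite set X with |X| = n and a family E of 4-element subsets of X with |E| = C(n−1, 3) such that the 4-uniform hypergraph (X, E) admits no no-rainbow 4-coloring. (Hence the lower bound |Q_S| ≥ C(n−1, 3) for decisive taxon coverage patterns is tight.) -/
/-- For every `n ≥ 4` there is a vertex set of size `n` and a family `E`
of 4-element subsets with `|E| = C(n-1,3)` such that the 4-uniform hypergraph `(X, E)`
admits no no-rainbow 4-coloring. -/
theorem exists_tight_hypergraph_no_noRainbow (n : ℕ) (hn : 4 ≤ n) :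
    ∃ E : Finset (Finset (Fin n)),
      (∀ e ∈ E, e.card = 4) ∧
      E.card = (n - 1).choose 3 ∧
      ¬ ∃ c : Fin n → Fin 4, Function.Surjective c ∧
          ∀ e ∈ E, ¬ (∀ i : Fin 4, ∃ v ∈ e, c v = i) := by
  haveI : NeZero n := ⟨by omega⟩
  set z : Fin n := 0 with hz
  refine ⟨((Finset.univ.erase z).powersetCard 3).image (insert z), ?_, ?_, ?_⟩
  · intro e he
    simp only [Finset.mem_image, Finset.mem_powersetCard] at he
    obtain ⟨s, ⟨hs, hcard⟩, rfl⟩ := he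
    rw [Finset.card_insert_of_notMem (fun h => (Finset.mem_erase.1 (hs h)).1 rfl), hcard]
  · rw [Finset.card_image_of_injOn, Finset.card_powersetCard, Finset.card_erase_of_mem
      (Finset.mem_univ z), Finset.card_univ, Fintype.card_fin]
    intro s hs t ht hst
    simp only [Finset.coe_filter, Finset.mem_coe, Finset.mem_powersetCard] at hs ht
    have hzs : z ∉ s := fun h => (Finset.mem_erase.1 (hs.1 h)).1 rfl
    have hzt : z ∉ t := fun h => (Finset.mem_erase.1 (ht.1 h)).1 rfl
    rw [← Finset.erase_insert hzs, ← Finset.erase_insert hzt, hst]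
  · rintro ⟨c, hc, hno⟩
    classical
    set g : Fin 4 → Fin n := fun i => if i = c z then z else Function.surjInv hc i with hg
    have hcg : ∀ i, c (g i) = i := by
      intro i
      simp only [hg]
      split
      · next h => rw [h]
      · exact Function.surjInv_eq hc i
    have hginj : Function.Injective g := fun i j h => by
      rw [← hcg i, ← hcg j, h]
    set e : Finset (Fin n) := Finset.univ.image g with he
    have hze : z ∈ e := by
      rw [he]
      exact Finset.mem_image.2 ⟨c z, Finset.mem_univ _, by simp [hg]⟩
    have hecard : e.card = 4 := by
      rw [he, Finset.card_image_of_injective _ hginj, Finset.card_univ, Fintype.card_fin]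
    refine hno e ?_ (fun i => ⟨g i, Finset.mem_image.2 ⟨i, Finset.mem_univ _, rfl⟩, hcg i⟩)
    refine Finset.mem_image.2 ⟨e.erase z, Finset.mem_powersetCard.2 ⟨?_, ?_⟩, Finset.insert_erase hze⟩
    · intro x hx
      exact Finset.mem_erase.2 ⟨(Finset.mem_erase.1 hx).1, Finset.mem_univ x⟩
    · rw [Finset.card_erase_of_mem hze, hecard]
end

section
/- For all integers n and r with n ≥ r ≥ 1 there exists an r-uniform hypergraph H = (X, E) on n vertices with exactly A(n, r) hyperedges that does not admit a no-rainbow r-coloring. -/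
/-- `A n r` is defined for `n ≥ r ≥ 1` by `A n r = 1` if `r = 1` or `n = r`, and
`A n r = A (n-1) (r-1) + A (n-1) r` otherwise. -/
def A : ℕ → ℕ → ℕ
  | _, 0 => 1
  | _, 1 => 1
  | 0, _ + 2 => 1
  | n + 1, r + 2 => if n + 1 = r + 2 then 1 else A n (r + 1) + A n (r + 2)

lemma A_eq_choose : ∀ n r, 1 ≤ r → r ≤ n → A n r = Nat.choose (n-1) (r-1)
  | _, 0, h, _ => by omega
  | n, 1, _, _ => by simp [A]
  | 0, r+2, _, h => by omega
  | n+1, r+2, _, h => by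
    by_cases heq : n + 1 = r + 2
    · rw [A, if_pos heq]
      have : n = r + 1 := by omega
      subst this
      simp
    · have h2 : r + 2 ≤ n := by omega
      obtain ⟨m, rfl⟩ : ∃ m, n = m + 1 := ⟨n - 1, by omega⟩
      rw [A, if_neg heq, A_eq_choose (m+1) (r+1) (by omega) (by omega),
        A_eq_choose (m+1) (r+2) (by omega) h2]
      simp only [Nat.succ_sub_one, Nat.add_sub_cancel]
      exact (Nat.choose_succ_succ m r).symm

/-- For all `n ≥ r ≥ 1`, there is an `r`-uniform hypergraph on `n`
vertices with exactly `A n r` hyperedges that admits no no-rainbow `r`-coloring. -/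
theorem exists_hypergraph_A_edges_no_noRainbow (n r : ℕ) (hr : 1 ≤ r) (hnr : r ≤ n) :
    ∃ E : Finset (Finset (Fin n)),
      (∀ e ∈ E, e.card = r) ∧
      E.card = A n r ∧
      ¬ ∃ c : Fin n → Fin r, Function.Surjective c ∧
          ∀ e ∈ E, ¬ (∀ i : Fin r, ∃ v ∈ e, c v = i) := by
  have hn : 0 < n := by omega
  set z : Fin n := ⟨0, hn⟩ with hz
  set E : Finset (Finset (Fin n)) :=
    ((Finset.univ.erase z).powersetCard (r-1)).image (insert z) with hE
  have hmem : ∀ e ∈ E, e.card = r ∧ z ∈ e := by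
    intro e he
    rw [hE, Finset.mem_image] at he
    obtain ⟨s, hs, rfl⟩ := he
    rw [Finset.mem_powersetCard] at hs
    have hzs : z ∉ s := fun hzz => (Finset.mem_erase.mp (hs.1 hzz)).1 rfl
    constructor
    · rw [Finset.card_insert_of_notMem hzs, hs.2]; omega
    · exact Finset.mem_insert_self _ _
  refine ⟨E, fun e he => (hmem e he).1, ?_, ?_⟩
  · rw [hE, Finset.card_image_of_injOn, Finset.card_powersetCard,
      Finset.card_erase_of_mem (Finset.mem_univ z), Finset.card_univ, Fintype.card_fin,
      A_eq_choose n r hr hnr]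
    intro s hs t ht hst
    rw [Finset.mem_coe, Finset.mem_powersetCard] at hs ht
    have hzs : z ∉ s := fun hzz => (Finset.mem_erase.mp (hs.1 hzz)).1 rfl
    have hzt : z ∉ t := fun hzz => (Finset.mem_erase.mp (ht.1 hzz)).1 rfl
    have := congrArg (Finset.erase · z) hst
    simpa [Finset.erase_insert hzs, Finset.erase_insert hzt] using this
  · rintro ⟨c, hsurj, hc⟩
    classical
    set f : Fin r → Fin n := fun i => if i = c z then z else Classical.choose (hsurj i) with hf
    have hcf : ∀ i, c (f i) = i := by
      intro i
      rw [hf]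
      by_cases hi : i = c z
      · simp [hi]
      · simpa [hi] using Classical.choose_spec (hsurj i)
    have hinj : Function.Injective f := fun i j hij => by
      have := congrArg c hij
      rwa [hcf, hcf] at this
    set S : Finset (Fin n) := Finset.univ.image f with hS
    have hzS : z ∈ S := by
      rw [hS, Finset.mem_image]
      exact ⟨c z, Finset.mem_univ _, by simp [hf]⟩
    have hcard : S.card = r := by
      rw [hS, Finset.card_image_of_injective _ hinj, Finset.card_univ, Fintype.card_fin]
    have hSE : S ∈ E := by
      rw [hE, Finset.mem_image]
      refine ⟨S.erase z, ?_, by rw [Finset.insert_erase hzS]⟩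
      rw [Finset.mem_powersetCard]
      constructor
      · intro x hx
        rw [Finset.mem_erase] at hx
        exact Finset.mem_erase.mpr ⟨hx.1, Finset.mem_univ x⟩
      · rw [Finset.card_erase_of_mem hzS, hcard]
    exact hc S hSE fun i => ⟨f i, Finset.mem_image_of_mem f (Finset.mem_univ i), hcf i⟩
end

section
/- Let H = (X, E) be a 4-uniform hypergraph with |X| ≥ 4 and |E| = k. If the number of equivalence classes of vertices under the relation 'belongs to exactly the same hyperedges' exceeds 2^{k−1} (i.e., n̂ > 2^{k−1}), then H admits a no-rainbow 4-coloring. -/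
/-- Let `(X, E)` be a 4-uniform hypergraph with `|X| ≥ 4` and
`|E| = k`.  If the number of equivalence classes of vertices under the relation
"belongs to exactly the same hyperedges" exceeds `2^(k-1)`, then `(X, E)` admits a
no-rainbow 4-coloring.  (Each equivalence class is identified with the common set of
incident hyperedges, so the number of classes is the cardinality of the image of
`v ↦ {e ∈ E : v ∈ e}`.) -/
theorem noRainbow_of_many_classes {α : Type*} [Fintype α] [DecidableEq α]
    (E : Finset (Finset α)) (hunif : ∀ e ∈ E, e.card = 4)
    (hX : 4 ≤ Fintype.card α) (k : ℕ) (hk : E.card = k)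
    (hclasses :
      2 ^ (k - 1) <
        (Finset.univ.image (fun v : α => E.filter (fun e => v ∈ e))).card) :
    ∃ c : α → Fin 4, Function.Surjective c ∧
      ∀ e ∈ E, ¬ (∀ i : Fin 4, ∃ v ∈ e, c v = i) := by
  classical
  have hαne : (Finset.univ : Finset α).Nonempty := by
    apply Finset.univ_nonempty_iff.mpr
    rw [← Fintype.card_pos_iff]; omega
  -- E is nonempty
  obtain ⟨e0, he0⟩ : E.Nonempty := by
    by_contra h
    rw [Finset.not_nonempty_iff_eq_empty] at h
    subst h
    simp at hk
    subst hk
    simp only [Finset.filter_empty] at hclasses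
    rw [Finset.image_const hαne] at hclasses
    simp at hclasses
  set f : α → Finset (Finset α) := fun v => E.filter (fun e => v ∈ e) with hf
  set g : Finset (Finset α) → Finset (Finset α) :=
    fun S => if e0 ∈ S then E \ S else S with hg
  have hsub : ∀ v : α, f v ⊆ E := fun v => Finset.filter_subset _ _
  have hmaps : ∀ S ∈ Finset.univ.image f, g S ∈ (E.erase e0).powerset := by
    intro S hS
    obtain ⟨v, -, rfl⟩ := Finset.mem_image.mp hS
    simp only [hg, Finset.mem_powerset]
    split_ifs with h
    · intro x hx
      rw [Finset.mem_sdiff] at hx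
      exact Finset.mem_erase.mpr ⟨fun hxe => hx.2 (hxe ▸ h), hx.1⟩
    · intro x hx
      exact Finset.mem_erase.mpr ⟨fun hxe => h (hxe ▸ hx), hsub v hx⟩
  have hcard : ((E.erase e0).powerset).card = 2 ^ (k - 1) := by
    rw [Finset.card_powerset, Finset.card_erase_of_mem he0, hk]
  obtain ⟨S, hS, T, hT, hST, hgeq⟩ :=
    Finset.exists_ne_map_eq_of_card_lt_of_maps_to (hcard ▸ hclasses) hmaps
  -- From g S = g T, S ≠ T, deduce complementary pair
  have key : ∃ u v : α, u ∈ e0 ∧ v ∉ e0 ∧ ∀ e ∈ E, (v ∈ e ↔ u ∉ e) := by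
    obtain ⟨u, -, rfl⟩ := Finset.mem_image.mp hS
    obtain ⟨v, -, rfl⟩ := Finset.mem_image.mp hT
    have hmemu : ∀ e, e ∈ f u ↔ e ∈ E ∧ u ∈ e := fun e => by
      simp [hf, Finset.mem_filter]
    have hmemv : ∀ e, e ∈ f v ↔ e ∈ E ∧ v ∈ e := fun e => by
      simp [hf, Finset.mem_filter]
    simp only [hg] at hgeq
    by_cases h1 : e0 ∈ f u <;> by_cases h2 : e0 ∈ f v <;>
      simp only [h1, h2, if_true, if_false] at hgeq
    · exfalso
      apply hST
      ext x
      by_cases hxE : x ∈ E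
      · have : x ∈ E \ f u ↔ x ∈ E \ f v := by rw [hgeq]
        simp only [Finset.mem_sdiff, hxE, true_and, hmemu, hmemv] at this
        rw [hmemu, hmemv]
        tauto
      · simp [hmemu, hmemv, hxE]
    · refine ⟨u, v, ((hmemu e0).mp h1).2, fun hve0 => h2 ((hmemv e0).mpr ⟨he0, hve0⟩), ?_⟩
      intro e he
      have heT : e ∈ f v ↔ e ∉ f u := by
        rw [← hgeq, Finset.mem_sdiff]
        exact ⟨fun h => h.2, fun h => ⟨he, h⟩⟩
      rw [hmemu, hmemv] at heT
      constructor
      · intro hve hue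
        exact (heT.mp ⟨he, hve⟩) ⟨he, hue⟩
      · intro hue
        exact (heT.mpr (fun h => hue h.2)).2
    · refine ⟨v, u, ((hmemv e0).mp h2).2, fun hue0 => h1 ((hmemu e0).mpr ⟨he0, hue0⟩), ?_⟩
      intro e he
      have heS : e ∈ f u ↔ e ∉ f v := by
        rw [hgeq, Finset.mem_sdiff]
        exact ⟨fun h => h.2, fun h => ⟨he, h⟩⟩
      rw [hmemu, hmemv] at heS
      constructor
      · intro hue hve
        exact (heS.mp ⟨he, hue⟩) ⟨he, hve⟩
      · intro hve
        exact (heS.mpr (fun h => hve h.2)).2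
    · exact absurd hgeq hST
  obtain ⟨u, v, hue0, hve0, hcomp⟩ := key
  have huv : u ≠ v := fun h => hve0 (h ▸ hue0)
  -- pick two more distinct vertices
  obtain ⟨w1, hw1, w2, hw2, hw12⟩ : ∃ w1 ∈ Finset.univ \ {u, v},
      ∃ w2 ∈ Finset.univ \ {u, v}, w1 ≠ w2 := by
    apply Finset.one_lt_card.mp
    have h2 : ({u, v} : Finset α).card ≤ 2 := Finset.card_insert_le _ _ |>.trans (by simp)
    have := Finset.card_sdiff_of_subset (Finset.subset_univ ({u, v} : Finset α))
    rw [this, Finset.card_univ]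
    omega
  simp only [Finset.mem_sdiff, Finset.mem_insert, Finset.mem_singleton, not_or] at hw1 hw2
  obtain ⟨-, hw1u, hw1v⟩ := hw1
  obtain ⟨-, hw2u, hw2v⟩ := hw2
  refine ⟨fun x => if x = u then 0 else if x = v then 1 else if x = w1 then 2 else 3, ?_, ?_⟩
  · intro i
    fin_cases i
    · exact ⟨u, by simp⟩
    · exact ⟨v, by simp [Ne.symm huv, huv]⟩
    · exact ⟨w1, by simp [hw1u, hw1v]⟩
    · exact ⟨w2, by simp [hw2u, hw2v, Ne.symm hw12]⟩
  · intro e he hall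
    by_cases hue : u ∈ e
    · have hve : v ∉ e := fun h => (hcomp e he).mp h hue
      obtain ⟨x, hxe, hx1⟩ := hall 1
      have : x = v := by
        by_contra hxv
        by_cases h1 : x = u <;> by_cases h2 : x = w1 <;>
          simp [h1, h2, hxv, hw1u, hw1v, huv, Ne.symm huv] at hx1
      exact hve (this ▸ hxe)
    · have hve : v ∈ e := (hcomp e he).mpr hue
      obtain ⟨x, hxe, hx0⟩ := hall 0
      have : x = u := by
        by_contra hxu
        by_cases h1 : x = v <;> by_cases h2 : x = w1 <;>
          simp [h1, h2, hxu, hw1u, hw1v, huv, Ne.symm huv] at hx0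
      exact hue (this ▸ hxe)
end

section
/- Let H = (X, E) be a 4-uniform hypergraph with n = |X|, let Ĥ = (X̂, Ê) be its reduced hypergraph, and let n̂ = |X̂|. Suppose n ≥ n̂ + 2. If Ĥ admits a no-rainbow r-coloring for some r ∈ {2, 3, 4}, then H admits a no-rainbow 4-coloring. -/
/-- Let `(X, E)` be a 4-uniform hypergraph with `n = |X|`, and let
`Ĥ = (X̂, Ê)` be its reduced hypergraph (vertices = equivalence classes of vertices
under "belongs to exactly the same hyperedges", each class identified with its common
set `sig v = {e ∈ E : v ∈ e}` of incident hyperedges; `Ê = {e.image sig : e ∈ E}`),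
with `n̂ = |X̂|`.  Suppose `n ≥ n̂ + 2`.  If `Ĥ` admits a no-rainbow `r`-coloring for
some `r ∈ {2, 3, 4}`, then `H` admits a no-rainbow 4-coloring. -/
theorem noRainbow_of_reduced_noRainbow {α : Type*} [Fintype α] [DecidableEq α]
    (E : Finset (Finset α)) (hunif : ∀ e ∈ E, e.card = 4)
    (sig : α → Finset (Finset α))
    (hsig : ∀ v : α, sig v = E.filter (fun e => v ∈ e))
    (hn : (Finset.univ.image sig).card + 2 ≤ Fintype.card α)
    (hred : ∃ r : ℕ, (r = 2 ∨ r = 3 ∨ r = 4) ∧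
        ∃ chat : Finset (Finset α) → Fin r,
          (∀ i : Fin r, ∃ s ∈ Finset.univ.image sig, chat s = i) ∧
          ∀ e ∈ E, ¬ (∀ i : Fin r, ∃ s ∈ e.image sig, chat s = i)) :
    ∃ c : α → Fin 4, Function.Surjective c ∧
      ∀ e ∈ E, ¬ (∀ i : Fin 4, ∃ v ∈ e, c v = i) := by
  classical
  obtain ⟨r, hr, chat, hsurj, hnor⟩ := hred
  have hr2 : 2 ≤ r := by rcases hr with h | h | h <;> omega
  have hr4 : r ≤ 4 := by rcases hr with h | h | h <;> omega
  have hne : Nonempty α := Fintype.card_pos_iff.mp (by omega)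
  set rep : Finset (Finset α) → α := Function.invFun sig with hrepdef
  set R : Finset α := (Finset.univ.image sig).image rep with hRdef
  have hRcard : R.card ≤ (Finset.univ.image sig).card := Finset.card_image_le
  have hSc : 1 < (Finset.univ \ R).card := by
    rw [Finset.card_sdiff_of_subset (Finset.subset_univ R), Finset.card_univ]
    omega
  obtain ⟨u, hu, w, hw, huw⟩ := Finset.one_lt_card.mp hSc
  have huR : u ∉ R := (Finset.mem_sdiff.mp hu).2
  have hwR : w ∉ R := (Finset.mem_sdiff.mp hw).2
  refine ⟨fun v => if v = u ∧ r < 3 then (2 : Fin 4) else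
      if v = w ∧ r < 4 then (3 : Fin 4) else Fin.castLE hr4 (chat (sig v)), ?_, ?_⟩
  · intro j
    by_cases hj : j.val < r
    · obtain ⟨s, hs, hcs⟩ := hsurj ⟨j.val, hj⟩
      refine ⟨rep s, ?_⟩
      beta_reduce
      have hrs : rep s ∈ R := Finset.mem_image_of_mem rep hs
      have h1 : ¬ (rep s = u ∧ r < 3) := fun h => huR (h.1 ▸ hrs)
      have h2 : ¬ (rep s = w ∧ r < 4) := fun h => hwR (h.1 ▸ hrs)
      have hsigrep : sig (rep s) = s := by
        apply Function.invFun_eq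
        obtain ⟨x, _, hx⟩ := Finset.mem_image.mp hs
        exact ⟨x, hx⟩
      rw [if_neg h1, if_neg h2, hsigrep, hcs]
      exact Fin.ext rfl
    · have hj23 : j.val = 2 ∨ j.val = 3 := by
        have := j.isLt; omega
      rcases hj23 with h | h
      · refine ⟨u, ?_⟩
        beta_reduce
        rw [if_pos ⟨rfl, by omega⟩]
        exact Fin.ext (by simpa using h.symm)
      · refine ⟨w, ?_⟩
        beta_reduce
        have hwu : ¬ (w = u ∧ r < 3) := fun h' => huw (h'.1.symm)
        rw [if_neg hwu, if_pos ⟨rfl, by omega⟩]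
        exact Fin.ext (by simpa using h.symm)
  · intro e he hall
    have h := hnor e he
    push_neg at h
    obtain ⟨i, hi⟩ := h
    obtain ⟨v, hv, hcv⟩ := hall (Fin.castLE hr4 i)
    beta_reduce at hcv
    have hival : i.val < r := i.isLt
    by_cases h1 : v = u ∧ r < 3
    · rw [if_pos h1] at hcv
      have := congrArg Fin.val hcv
      simp only [Fin.coe_castLE] at this
      have h2v : ((2 : Fin 4) : ℕ) = 2 := rfl
      omega
    · rw [if_neg h1] at hcv
      by_cases h2 : v = w ∧ r < 4
      · rw [if_pos h2] at hcv
        have := congrArg Fin.val hcv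
        simp only [Fin.coe_castLE] at this
        have h3v : ((3 : Fin 4) : ℕ) = 3 := rfl
        omega
      · rw [if_neg h2] at hcv
        have : chat (sig v) = i := by
          have hval := congrArg Fin.val hcv
          simp only [Fin.coe_castLE] at hval
          exact Fin.ext hval
        exact hi (sig v) (Finset.mem_image_of_mem sig hv) this
end

section
/- Let H = (X, E) be a 4-uniform hypergraph admitting a no-rainbow 4-coloring c, let Ĥ = (X̂, Ê) be its reduced hypergraph, let R ⊆ X contain exactly one vertex from each equivalence class, and let ĉ : X̂ → {1, 2, 3, 4} be defined by ĉ([v]) = c(r) where r is the representative in R of the class [v]. If ĉ uses exactly 3 colors and some hyperedge ê ∈ Ê contains classes of all 3 of these colors, then Ĥ admits a no-rainbow 4-coloring. -/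
/-- Let `(X, E)` be a 4-uniform hypergraph admitting a no-rainbow
4-coloring `c`, let `Ĥ` be its reduced hypergraph (vertices = equivalence classes
under "belongs to exactly the same hyperedges", each class identified with the common
incidence set `sig v = {e ∈ E : v ∈ e}`; hyperedges `e.image sig` for `e ∈ E`), let
`R ⊆ X` contain exactly one vertex from each class, and let `chat` assign to each
class the `c`-color of its representative in `R`.  If `chat` uses exactly 3 colors and
some hyperedge of `Ĥ` contains classes of all 3 of these colors, then `Ĥ` admits a
no-rainbow 4-coloring. -/
theorem reduced_noRainbow4_of_rainbow3 {α : Type*} [Fintype α] [DecidableEq α]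
    (E : Finset (Finset α)) (hunif : ∀ e ∈ E, e.card = 4)
    (c : α → Fin 4) (hc : Function.Surjective c)
    (hnr : ∀ e ∈ E, ¬ (∀ i : Fin 4, ∃ v ∈ e, c v = i))
    (sig : α → Finset (Finset α))
    (hsig : ∀ v : α, sig v = E.filter (fun e => v ∈ e))
    (R : Finset α)
    (hRex : ∀ v : α, ∃ r ∈ R, sig r = sig v)
    (hRuniq : ∀ r₁ ∈ R, ∀ r₂ ∈ R, sig r₁ = sig r₂ → r₁ = r₂)
    (chat : Finset (Finset α) → Fin 4)
    (hchat : ∀ r ∈ R, chat (sig r) = c r)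
    (h3 : ((Finset.univ.image sig).image chat).card = 3)
    (hrb : ∃ e ∈ E, ∀ q ∈ (Finset.univ.image sig).image chat,
        ∃ s ∈ e.image sig, chat s = q) :
    ∃ c' : Finset (Finset α) → Fin 4,
      (∀ i : Fin 4, ∃ s ∈ Finset.univ.image sig, c' s = i) ∧
      ∀ e ∈ E, ¬ (∀ i : Fin 4, ∃ s ∈ e.image sig, c' s = i) := by
  classical
  obtain ⟨e, heE, herb⟩ := hrb
  set T := ((Finset.univ.image sig).image chat) with hT
  -- membership in edges via sig
  have hmemiff : ∀ v : α, ∀ e' ∈ E, (v ∈ e' ↔ e' ∈ sig v) := by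
    intro v e' he'
    rw [hsig v]
    simp [he']
  -- a color missing from T
  have hT4 : ∃ i : Fin 4, i ∉ T := by
    by_contra h
    push_neg at h
    have hsub : (Finset.univ : Finset (Fin 4)) ⊆ T := fun i _ => h i
    have := Finset.card_le_card hsub
    rw [h3] at this
    simp at this
  obtain ⟨i₄, hi₄⟩ := hT4
  -- every other color is in T
  have hmem : ∀ i : Fin 4, i ≠ i₄ → i ∈ T := by
    intro i hi
    by_contra hiT
    have hsub : T ⊆ (Finset.univ : Finset (Fin 4)) \ {i₄, i} := by
      intro j hj
      simp only [Finset.mem_sdiff, Finset.mem_insert, Finset.mem_singleton]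
      refine ⟨Finset.mem_univ j, ?_⟩
      rintro (rfl | rfl)
      · exact hi₄ hj
      · exact hiT hj
    have hle := Finset.card_le_card hsub
    rw [h3, Finset.card_sdiff_of_subset (by simp)] at hle
    rw [Finset.card_insert_of_notMem (by simp [Ne.symm hi]), Finset.card_singleton] at hle
    simp at hle
  obtain ⟨w, hw⟩ := hc i₄
  obtain ⟨rw', hrwR, hrww⟩ := hRex w
  have hcrw : c rw' = chat (sig w) := by rw [← hchat rw' hrwR, hrww]
  have hsigwT : chat (sig w) ∈ T := by
    rw [hT]
    exact Finset.mem_image_of_mem chat (Finset.mem_image_of_mem sig (Finset.mem_univ w))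
  have hwne : rw' ≠ w := by
    intro h
    rw [h, hw] at hcrw
    exact hi₄ (hcrw ▸ hsigwT)
  -- key: sig w ∉ e.image sig
  have hkey : sig w ∉ e.image sig := by
    intro hmem'
    apply hnr e heE
    intro i
    by_cases hi : i = i₄
    · subst hi
      obtain ⟨u, hu, hsu⟩ := Finset.mem_image.mp hmem'
      have he1 : e ∈ sig w := hsu ▸ (hmemiff u e heE).mp hu
      exact ⟨w, (hmemiff w e heE).mpr he1, hw⟩
    · obtain ⟨s, hs, hcs⟩ := herb i (hmem i hi)
      obtain ⟨u, hu, rfl⟩ := Finset.mem_image.mp hs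
      obtain ⟨r, hrR, hr⟩ := hRex u
      refine ⟨r, (hmemiff r e heE).mpr (hr ▸ (hmemiff u e heE).mp hu), ?_⟩
      rw [← hchat r hrR, hr]
      exact hcs
  -- the new coloring
  refine ⟨fun s => if s = sig w then i₄ else chat s, ?_, ?_⟩
  · intro i
    by_cases hi : i = i₄
    · subst hi
      exact ⟨sig w, Finset.mem_image_of_mem sig (Finset.mem_univ w), if_pos rfl⟩
    · obtain ⟨s, hs, hcs⟩ := herb i (hmem i hi)
      obtain ⟨u, hu, rfl⟩ := Finset.mem_image.mp hs
      have hne : sig u ≠ sig w := fun h => hkey (h ▸ hs)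
      exact ⟨sig u, Finset.mem_image_of_mem sig (Finset.mem_univ u),
        by simp only [if_neg hne]; exact hcs⟩
  · intro f hfE hrain
    -- the i₄-colored class in f must be sig w
    obtain ⟨s₄, hs₄, hcs₄⟩ := hrain i₄
    have hs₄w : s₄ = sig w := by
      by_contra h
      simp only [if_neg h] at hcs₄
      obtain ⟨u, hu, rfl⟩ := Finset.mem_image.mp hs₄
      exact hi₄ (hcs₄ ▸ Finset.mem_image_of_mem chat
        (Finset.mem_image_of_mem sig (Finset.mem_univ u)))
    -- so w and rw' are both in f
    have hwf : w ∈ f := by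
      obtain ⟨u, hu, hsu⟩ := Finset.mem_image.mp (hs₄w ▸ hs₄)
      exact (hmemiff w f hfE).mpr (hsu ▸ (hmemiff u f hfE).mp hu)
    have hrwf : rw' ∈ f := (hmemiff rw' f hfE).mpr (hrww ▸ (hmemiff w f hfE).mp hwf)
    -- lower bound: f.image sig has at least 4 elements
    have hlow : 4 ≤ (f.image sig).card := by
      have hsub : (Finset.univ : Finset (Fin 4)) ⊆
          (f.image sig).image (fun s => if s = sig w then i₄ else chat s) := by
        intro i _
        obtain ⟨s, hs, hcs⟩ := hrain i
        exact Finset.mem_image.mpr ⟨s, hs, hcs⟩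
      calc 4 = (Finset.univ : Finset (Fin 4)).card := by simp
        _ ≤ _ := Finset.card_le_card hsub
        _ ≤ (f.image sig).card := Finset.card_image_le
    -- upper bound: sig merges w and rw', so at most 3 classes
    have hup : (f.image sig).card ≤ 3 := by
      have hsub : f.image sig ⊆ (f.erase rw').image sig := by
        intro s hs
        obtain ⟨u, hu, rfl⟩ := Finset.mem_image.mp hs
        by_cases h : u = rw'
        · subst h
          exact Finset.mem_image.mpr ⟨w, Finset.mem_erase.mpr ⟨Ne.symm hwne, hwf⟩,
            hrww.symm⟩
        · exact Finset.mem_image.mpr ⟨u, Finset.mem_erase.mpr ⟨h, hu⟩, rfl⟩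
      calc (f.image sig).card ≤ ((f.erase rw').image sig).card := Finset.card_le_card hsub
        _ ≤ (f.erase rw').card := Finset.card_image_le
        _ = f.card - 1 := Finset.card_erase_of_mem hrwf
        _ = 3 := by rw [hunif f hfE]
    omega
end

section
/- Let H = (X, E) be a 4-uniform hypergraph admitting a no-rainbow 4-coloring c, let Ĥ = (X̂, Ê) be its reduced hypergraph, let R ⊆ X contain exactly one vertex from each equivalence class, and let ĉ : X̂ → {1, 2, 3, 4} be defined by ĉ([v]) = c(r) where r is the representative in R of the class [v]. If ĉ uses exactly 2 colors and some hyperedge ê ∈ Ê contains classes of both of these colors, then Ĥ admits a no-rainbow r-coloring for some r ∈ {3, 4}. -/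
/-- Let `(X, E)` be a 4-uniform hypergraph admitting a no-rainbow
4-coloring `c`, let `Ĥ` be its reduced hypergraph (vertices = equivalence classes
under "belongs to exactly the same hyperedges", each class identified with the common
incidence set `sig v = {e ∈ E : v ∈ e}`; hyperedges `e.image sig` for `e ∈ E`), let
`R ⊆ X` contain exactly one vertex from each class, and let `chat` assign to each
class the `c`-color of its representative in `R`.  If `chat` uses exactly 2 colors and
some hyperedge of `Ĥ` contains classes of both of these colors, then `Ĥ` admits a
no-rainbow `r`-coloring for some `r ∈ {3, 4}`. -/
theorem reduced_noRainbow_of_rainbow2 {α : Type*} [Fintype α] [DecidableEq α]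
    (E : Finset (Finset α)) (hunif : ∀ e ∈ E, e.card = 4)
    (c : α → Fin 4) (hc : Function.Surjective c)
    (hnr : ∀ e ∈ E, ¬ (∀ i : Fin 4, ∃ v ∈ e, c v = i))
    (sig : α → Finset (Finset α))
    (hsig : ∀ v : α, sig v = E.filter (fun e => v ∈ e))
    (R : Finset α)
    (hRex : ∀ v : α, ∃ r ∈ R, sig r = sig v)
    (hRuniq : ∀ r₁ ∈ R, ∀ r₂ ∈ R, sig r₁ = sig r₂ → r₁ = r₂)
    (chat : Finset (Finset α) → Fin 4)
    (hchat : ∀ r ∈ R, chat (sig r) = c r)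
    (h2 : ((Finset.univ.image sig).image chat).card = 2)
    (hrb : ∃ e ∈ E, ∀ q ∈ (Finset.univ.image sig).image chat,
        ∃ s ∈ e.image sig, chat s = q) :
    ∃ r : ℕ, (r = 3 ∨ r = 4) ∧
      ∃ c' : Finset (Finset α) → Fin r,
        (∀ i : Fin r, ∃ s ∈ Finset.univ.image sig, c' s = i) ∧
        ∀ e ∈ E, ¬ (∀ i : Fin r, ∃ s ∈ e.image sig, c' s = i) := by
  classical
  have hmem : ∀ e ∈ E, ∀ x y : α, y ∈ e → sig x = sig y → x ∈ e := by
    intro e he x y hy hxy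
    have h1 : e ∈ sig y := by rw [hsig]; exact Finset.mem_filter.2 ⟨he, hy⟩
    have h2' : e ∈ sig x := by rw [hxy]; exact h1
    rw [hsig] at h2'
    exact (Finset.mem_filter.1 h2').2
  set Xh := Finset.univ.image sig with hXh
  have hm2 : 2 ≤ Xh.card := h2 ▸ Finset.card_image_le
  by_cases hm : 4 ≤ Xh.card
  · -- r = 4 : recolor a big class
    have hbig : ∃ u v : α, u ≠ v ∧ sig u = sig v := by
      by_contra hcon
      push_neg at hcon
      have hceq : ∀ v : α, c v = chat (sig v) := by
        intro v
        obtain ⟨r, hrR, hr⟩ := hRex v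
        have hrv : r = v := by
          by_contra hne
          exact (hcon r v hne) hr
        have := hchat r hrR
        rw [hr, hrv] at this
        exact this.symm
      have himg : Xh.image chat = Finset.univ.image c := by
        rw [hXh, Finset.image_image]
        apply Finset.image_congr
        intro x _
        exact (hceq x).symm
      have hcard4 : (Finset.univ.image c).card = 2 := himg ▸ h2
      rw [Finset.image_univ_of_surjective hc] at hcard4
      simp at hcard4
    obtain ⟨u, v, huv, hsiguv⟩ := hbig
    set t := sig u with ht
    have htX : t ∈ Xh := Finset.mem_image.2 ⟨u, Finset.mem_univ u, rfl⟩
    have herase : 3 ≤ (Xh.erase t).card := by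
      rw [Finset.card_erase_of_mem htX]; omega
    obtain ⟨S, hS, hScard⟩ := Finset.exists_subset_card_eq herase
    obtain ⟨s1, s2, s3, h12, h13, h23, hSeq⟩ := Finset.card_eq_three.1 hScard
    have hs1e : s1 ∈ Xh.erase t := hS (by rw [hSeq]; simp)
    have hs2e : s2 ∈ Xh.erase t := hS (by rw [hSeq]; simp)
    have hs3e : s3 ∈ Xh.erase t := hS (by rw [hSeq]; simp)
    have hs1t : s1 ≠ t := (Finset.mem_erase.1 hs1e).1
    have hs2t : s2 ≠ t := (Finset.mem_erase.1 hs2e).1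
    have hs3t : s3 ≠ t := (Finset.mem_erase.1 hs3e).1
    have hs1X : s1 ∈ Xh := (Finset.mem_erase.1 hs1e).2
    have hs2X : s2 ∈ Xh := (Finset.mem_erase.1 hs2e).2
    have hs3X : s3 ∈ Xh := (Finset.mem_erase.1 hs3e).2
    refine ⟨4, Or.inr rfl,
      (fun s => if s = t then 3 else if s = s1 then 0 else if s = s2 then 1 else 2),
      ?_, ?_⟩
    · intro i
      fin_cases i
      · exact ⟨s1, hs1X, by simp [hs1t]⟩
      · exact ⟨s2, hs2X, by simp [hs2t, Ne.symm h12]⟩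
      · exact ⟨s3, hs3X, by simp [hs3t, Ne.symm h13, Ne.symm h23]⟩
      · exact ⟨t, htX, by simp⟩
    · intro e he hrain
      obtain ⟨st, hstE, hst3⟩ := hrain 3
      obtain ⟨sa, hsaE, hsa0⟩ := hrain 0
      obtain ⟨sb, hsbE, hsb1⟩ := hrain 1
      obtain ⟨z, hzE, hz2⟩ := hrain 2
      simp only at hst3 hsa0 hsb1 hz2
      have hstt : st = t := by
        split_ifs at hst3 with A B C
        exacts [A, absurd hst3 (by decide), absurd hst3 (by decide),
          absurd hst3 (by decide)]
      have hsas : sa = s1 := by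
        split_ifs at hsa0 with A B C
        exacts [absurd hsa0 (by decide), B, absurd hsa0 (by decide),
          absurd hsa0 (by decide)]
      have hsbs : sb = s2 := by
        split_ifs at hsb1 with A B C
        exacts [absurd hsb1 (by decide), absurd hsb1 (by decide), C,
          absurd hsb1 (by decide)]
      have hzs : z ≠ t ∧ z ≠ s1 ∧ z ≠ s2 := by
        split_ifs at hz2 with A B C
        exacts [absurd hz2 (by decide), absurd hz2 (by decide),
          absurd hz2 (by decide), ⟨A, B, C⟩]
      subst hstt hsas hsbs
      obtain ⟨y0, hy0, hsy0⟩ := Finset.mem_image.1 hstE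
      obtain ⟨y1, hy1, hsy1⟩ := Finset.mem_image.1 hsaE
      obtain ⟨y2, hy2, hsy2⟩ := Finset.mem_image.1 hsbE
      obtain ⟨yz, hyz, hsyz⟩ := Finset.mem_image.1 hzE
      have hue : u ∈ e := hmem e he u y0 hy0 (by rw [hsy0])
      have hve : v ∈ e := hmem e he v y0 hy0 (by rw [hsy0]; exact hsiguv.symm)
      have hsigu : sig u = t := rfl
      have hsigv : sig v = t := hsiguv.symm
      have hney : ∀ x y : α, sig x ≠ sig y → x ≠ y := by
        intro x y h hxy; exact h (by rw [hxy])
      have nu1 : u ≠ y1 := hney _ _ (by rw [hsigu, hsy1]; exact Ne.symm hs1t)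
      have nu2 : u ≠ y2 := hney _ _ (by rw [hsigu, hsy2]; exact Ne.symm hs2t)
      have nuz : u ≠ yz := hney _ _ (by rw [hsigu, hsyz]; exact Ne.symm hzs.1)
      have nv1 : v ≠ y1 := hney _ _ (by rw [hsigv, hsy1]; exact Ne.symm hs1t)
      have nv2 : v ≠ y2 := hney _ _ (by rw [hsigv, hsy2]; exact Ne.symm hs2t)
      have nvz : v ≠ yz := hney _ _ (by rw [hsigv, hsyz]; exact Ne.symm hzs.1)
      have n12 : y1 ≠ y2 := hney _ _ (by rw [hsy1, hsy2]; exact h12)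
      have n1z : y1 ≠ yz := hney _ _ (by rw [hsy1, hsyz]; exact Ne.symm hzs.2.1)
      have n2z : y2 ≠ yz := hney _ _ (by rw [hsy2, hsyz]; exact Ne.symm hzs.2.2)
      have hsub : ({u, v, y1, y2, yz} : Finset α) ⊆ e := by
        intro x hx
        simp only [Finset.mem_insert, Finset.mem_singleton] at hx
        rcases hx with h | h | h | h | h <;> subst h <;> assumption
      have hcard5 : ({u, v, y1, y2, yz} : Finset α).card = 5 := by
        have m1 : u ∉ ({v, y1, y2, yz} : Finset α) := by
          simp only [Finset.mem_insert, Finset.mem_singleton]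
          push_neg
          exact ⟨huv, nu1, nu2, nuz⟩
        have m2 : v ∉ ({y1, y2, yz} : Finset α) := by
          simp only [Finset.mem_insert, Finset.mem_singleton]
          push_neg
          exact ⟨nv1, nv2, nvz⟩
        have m3 : y1 ∉ ({y2, yz} : Finset α) := by
          simp only [Finset.mem_insert, Finset.mem_singleton]
          push_neg
          exact ⟨n12, n1z⟩
        have m4 : y2 ∉ ({yz} : Finset α) := by
          simp only [Finset.mem_singleton]
          exact n2z
        rw [Finset.card_insert_of_notMem m1, Finset.card_insert_of_notMem m2,
          Finset.card_insert_of_notMem m3, Finset.card_insert_of_notMem m4,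
          Finset.card_singleton]
      have h5 : 5 ≤ e.card := hcard5 ▸ Finset.card_le_card hsub
      have h4 : e.card = 4 := hunif e he
      omega
  · by_cases hm3 : Xh.card = 3
    · -- r = 3 : the three classes as color classes
      obtain ⟨a, b, c0, hab, hac, hbc, hXeq⟩ := Finset.card_eq_three.1 hm3
      have haX : a ∈ Xh := by rw [hXeq]; simp
      have hbX : b ∈ Xh := by rw [hXeq]; simp
      have hcX : c0 ∈ Xh := by rw [hXeq]; simp
      refine ⟨3, Or.inl rfl,
        (fun s => if s = a then 0 else if s = b then 1 else 2), ?_, ?_⟩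
      · intro i
        fin_cases i
        · exact ⟨a, haX, by simp⟩
        · exact ⟨b, hbX, by simp [Ne.symm hab]⟩
        · exact ⟨c0, hcX, by simp [Ne.symm hac, Ne.symm hbc]⟩
      · intro e he hrain
        obtain ⟨sa, hsaE, hsa0⟩ := hrain 0
        obtain ⟨sb, hsbE, hsb1⟩ := hrain 1
        obtain ⟨sc, hscE, hsc2⟩ := hrain 2
        simp only at hsa0 hsb1 hsc2
        have hsaa : sa = a := by
          split_ifs at hsa0 with A B
          exacts [A, absurd hsa0 (by decide), absurd hsa0 (by decide)]
        have hsbb : sb = b := by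
          split_ifs at hsb1 with A B
          exacts [absurd hsb1 (by decide), B, absurd hsb1 (by decide)]
        have hscc : sc = c0 := by
          split_ifs at hsc2 with A B
          · exact absurd hsc2 (by decide)
          · exact absurd hsc2 (by decide)
          · have : sc ∈ Xh := by
              obtain ⟨y, hy, hyy⟩ := Finset.mem_image.1 hscE
              exact Finset.mem_image.2 ⟨y, Finset.mem_univ y, hyy⟩
            rw [hXeq] at this
            simp only [Finset.mem_insert, Finset.mem_singleton] at this
            rcases this with h | h | h
            · exact absurd h A
            · exact absurd h B
            · exact h
        subst hsaa hsbb hscc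
        have hall : ∀ x : α, x ∈ e := by
          intro x
          have hx : sig x ∈ Xh := Finset.mem_image.2 ⟨x, Finset.mem_univ x, rfl⟩
          rw [hXeq] at hx
          simp only [Finset.mem_insert, Finset.mem_singleton] at hx
          have hx' : sig x ∈ e.image sig := by
            rcases hx with h | h | h <;> rw [h] <;> assumption
          obtain ⟨y, hy, hsy⟩ := Finset.mem_image.1 hx'
          exact hmem e he x y hy hsy.symm
        exact hnr e he (fun i => by obtain ⟨x, hx⟩ := hc i; exact ⟨x, hall x, hx⟩)
    · -- Xh.card = 2 : contradiction
      have hm2' : Xh.card = 2 := by omega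
      obtain ⟨a, b, hab, hXeq⟩ := Finset.card_eq_two.1 hm2'
      have haX : a ∈ Xh := by rw [hXeq]; simp
      have hbX : b ∈ Xh := by rw [hXeq]; simp
      have hchatne : chat a ≠ chat b := by
        intro h
        rw [hXeq] at h2
        rw [Finset.image_insert, Finset.image_singleton, h,
          Finset.insert_eq_self.2 (Finset.mem_singleton_self _)] at h2
        simp at h2
      obtain ⟨e0, he0, hq⟩ := hrb
      have hmemXh : ∀ s ∈ e0.image sig, s ∈ Xh := by
        intro s hs
        obtain ⟨y, hy, hyy⟩ := Finset.mem_image.1 hs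
        exact Finset.mem_image.2 ⟨y, Finset.mem_univ y, hyy⟩
      have haE : a ∈ e0.image sig := by
        obtain ⟨s, hsE, hs⟩ := hq (chat a) (Finset.mem_image_of_mem _ haX)
        have := hmemXh s hsE
        rw [hXeq] at this
        simp only [Finset.mem_insert, Finset.mem_singleton] at this
        rcases this with h | h
        · rw [← h]; exact hsE
        · rw [h] at hs; exact absurd hs.symm hchatne
      have hbE : b ∈ e0.image sig := by
        obtain ⟨s, hsE, hs⟩ := hq (chat b) (Finset.mem_image_of_mem _ hbX)
        have := hmemXh s hsE
        rw [hXeq] at this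
        simp only [Finset.mem_insert, Finset.mem_singleton] at this
        rcases this with h | h
        · rw [h] at hs; exact absurd hs hchatne
        · rw [← h]; exact hsE
      have hall : ∀ x : α, x ∈ e0 := by
        intro x
        have hx : sig x ∈ Xh := Finset.mem_image.2 ⟨x, Finset.mem_univ x, rfl⟩
        rw [hXeq] at hx
        simp only [Finset.mem_insert, Finset.mem_singleton] at hx
        have hx' : sig x ∈ e0.image sig := by
          rcases hx with h | h <;> rw [h] <;> assumption
        obtain ⟨y, hy, hsy⟩ := Finset.mem_image.1 hx'
        exact hmem e0 he0 x y hy hsy.symm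
      exact absurd (fun i => by obtain ⟨x, hx⟩ := hc i; exact ⟨x, hall x, hx⟩)
        (hnr e0 he0)
end
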